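/- arXiv:2102.12524 — 2 statements merged into one kernel-verified Lean document; each statement's English description precedes it below -/
import Mathlib

section
/- Let R be a finitely generated subring of a number field k, viewed inside ℂ via a fixed embedding, and let ω ∈ R. Set Z_ω = {m + n·ω : m, n ∈ ℤ} and Q_ω = {m + n·ω : m, n ∈ ℚ}. If y ∈ R \ Q_ω, then there exists a finite ring S and a ring homomorphism ρ : R → S such that ρ(y) ∉ ρ(Z_ω). -/
section Aux

variable {k : Type*} [Field k] [NumberField k]

/-- A linear functional killing 1 and ω but not y. -/
lemma aux_exists_functional (ω y : k)
    (hyQ : y ∉ {x : k | ∃ m n : ℚ, x = (m : k) + (n : k) * ω}) :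
    ∃ φ : k →ₗ[ℚ] ℚ, φ 1 = 0 ∧ φ ω = 0 ∧ φ y = 1 := by
  set W : Submodule ℚ k := Submodule.span ℚ ({1, ω} : Set k) with hW
  have hyW : y ∉ W := by
    intro hy
    rw [hW, Submodule.mem_span_pair] at hy
    obtain ⟨a, b, hab⟩ := hy
    exact hyQ ⟨a, b, by rw [← hab]; simp [Rat.smul_def]⟩
  have hq : (Submodule.Quotient.mk y : k ⧸ W) ≠ 0 := by
    simpa [Submodule.Quotient.mk_eq_zero] using hyW
  obtain ⟨g, hg⟩ : ∃ g : Module.Dual ℚ (k ⧸ W), g (Submodule.Quotient.mk y) ≠ 0 := by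
    by_contra h
    push_neg at h
    exact hq ((Module.forall_dual_apply_eq_zero_iff ℚ _).mp h)
  refine ⟨(g (Submodule.Quotient.mk y))⁻¹ • (g.comp W.mkQ), ?_, ?_, ?_⟩
  · have h1 : (1 : k) ∈ W := Submodule.subset_span (by simp)
    simp [Submodule.mkQ_apply, (Submodule.Quotient.mk_eq_zero W).mpr h1]
  · have h2 : ω ∈ W := Submodule.subset_span (by simp)
    simp [Submodule.mkQ_apply, (Submodule.Quotient.mk_eq_zero W).mpr h2]
  · simp [Submodule.mkQ_apply, inv_mul_cancel₀ hg]

/-- Bounded denominators on integral elements. -/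
lemma aux_denom_bound (φ : k →ₗ[ℚ] ℚ) :
    ∃ D : ℕ, 0 < D ∧ ∀ x : k, IsIntegral ℤ x → ∃ z : ℤ, (D : ℚ) * φ x = z := by
  classical
  set O := NumberField.RingOfIntegers k
  let LZ : O →ₗ[ℤ] ℚ :=
    (φ.restrictScalars ℤ).comp (algebraMap O k).toIntAlgHom.toLinearMap
  have hfin : Module.Finite ℤ O := inferInstance
  have hfg : (LinearMap.range LZ).FG := by
    rw [LinearMap.range_eq_map]
    exact (Module.finite_def.mp hfin).map LZ
  obtain ⟨T, hT⟩ := hfg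
  refine ⟨∏ t ∈ T, t.den, Finset.prod_pos (fun t _ => t.pos), ?_⟩
  set D : ℕ := ∏ t ∈ T, t.den with hD
  let M : Submodule ℤ ℚ :=
    { carrier := {x : ℚ | ∃ z : ℤ, (D : ℚ) * x = z}
      zero_mem' := ⟨0, by simp⟩
      add_mem' := by
        rintro a b ⟨za, hza⟩ ⟨zb, hzb⟩
        exact ⟨za + zb, by push_cast; rw [mul_add, hza, hzb]⟩
      smul_mem' := by
        rintro c x ⟨z, hz⟩
        refine ⟨c * z, ?_⟩
        push_cast
        rw [zsmul_eq_mul, mul_left_comm, hz, mul_comm] }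
  have hTM : (T : Set ℚ) ⊆ M := by
    intro t ht
    have hdvd : t.den ∣ D := Finset.dvd_prod_of_mem (fun t => t.den) ht
    refine ⟨(D / t.den : ℕ) * t.num, ?_⟩
    have h1 : ((D / t.den : ℕ) : ℚ) * (t.den : ℚ) = (D : ℚ) := by
      rw [← Nat.cast_mul, Nat.div_mul_cancel hdvd]
    have h2 : (t.den : ℚ) * t = (t.num : ℚ) := by
      have := Rat.num_div_den t
      field_simp
      exact Rat.den_mul_eq_num t
    have h3 : ((((D / t.den : ℕ) : ℤ) * t.num : ℤ) : ℚ)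
        = ((D / t.den : ℕ) : ℚ) * (t.num : ℚ) := by
      rw [Int.cast_mul, Int.cast_natCast]
    rw [h3, ← h1, mul_assoc, h2]
  have hrange : LinearMap.range LZ ≤ M := by
    rw [← hT]
    exact Submodule.span_le.mpr hTM
  intro x hx
  have hmem : φ x ∈ M := by
    have : LZ ⟨x, hx⟩ ∈ LinearMap.range LZ := ⟨⟨x, hx⟩, rfl⟩
    exact hrange this
  exact hmem

end Aux

set_option maxHeartbeats 1000000 in
set_option synthInstance.maxHeartbeats 400000 in
/-- Hamilton–Wilton–Zalesskii: if `R` is a finitely generated subring of a number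
field `k` (embedded in `ℂ`), `ω ∈ R`, and `y ∈ R` is not a `ℚ`-linear combination
of `1` and `ω`, then some finite ring quotient of `R` separates `y` from
`Z_ω = {m + nω : m, n ∈ ℤ}`. -/
theorem separate_from_Z_omega {k : Type*} [Field k] [NumberField k] (f : k →+* ℂ)
    (R : Subring k) (hfg : ∃ s : Finset k, Subring.closure (s : Set k) = R)
    (ω : k) (hω : ω ∈ R) (y : k) (hy : y ∈ R)
    (hyQ : y ∉ {x : k | ∃ m n : ℚ, x = (m : k) + (n : k) * ω}) :
    ∃ (S : Type) (_ : CommRing S) (_ : Finite S) (ρ : R →+* S),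
      ρ ⟨y, hy⟩ ∉ ρ '' {z : R | ∃ m n : ℤ, (z : k) = (m : k) + (n : k) * ω} := by
  classical
  obtain ⟨s, hs⟩ := hfg
  obtain ⟨φ, hφ1, hφω, hφy⟩ := aux_exists_functional ω y hyQ
  obtain ⟨D, hD0, hD⟩ := aux_denom_bound φ
  -- clear denominators of the generators
  obtain ⟨d, hd0, hmul⟩ := exists_integral_multiples ℤ ℚ s
  -- membership in R forces integrality after scaling by a power of d
  have hdint : IsIntegral ℤ ((d : k)) := by
    simpa using isIntegral_algebraMap (R := ℤ) (A := k) (x := d)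
  have hdR : ∀ r ∈ R, ∃ n : ℕ, IsIntegral ℤ ((d : k) ^ n * r) := by
    let T' : Subring k :=
    { carrier := {x : k | ∃ n : ℕ, IsIntegral ℤ ((d : k) ^ n * x)}
      one_mem' := ⟨0, by simpa using isIntegral_one⟩
      zero_mem' := ⟨0, by simpa using isIntegral_zero⟩
      add_mem' := by
        rintro a b ⟨na, hna⟩ ⟨nb, hnb⟩
        refine ⟨na + nb, ?_⟩
        have e : (d : k) ^ (na + nb) * (a + b)
            = (d : k) ^ nb * ((d : k) ^ na * a) + (d : k) ^ na * ((d : k) ^ nb * b) := by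
          ring
        rw [e]
        exact ((hdint.pow nb).mul hna).add ((hdint.pow na).mul hnb)
      neg_mem' := by
        rintro a ⟨na, hna⟩
        exact ⟨na, by rw [mul_neg]; exact hna.neg⟩
      mul_mem' := by
        rintro a b ⟨na, hna⟩ ⟨nb, hnb⟩
        refine ⟨na + nb, ?_⟩
        have e : (d : k) ^ (na + nb) * (a * b) = ((d : k) ^ na * a) * ((d : k) ^ nb * b) := by
          ring
        rw [e]
        exact hna.mul hnb }
    have hRT : R ≤ T' := by
      rw [← hs]
      apply Subring.closure_le.mpr
      intro x hx
      exact ⟨1, by rw [pow_one]; simpa [zsmul_eq_mul] using hmul x hx⟩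
    exact fun r hr => hRT hr
  -- choose a suitable prime
  obtain ⟨p, hplt, hp⟩ := Nat.exists_infinite_primes (max D d.natAbs + 2)
  have hpD : ¬ (p ∣ D) := by
    intro h
    have := Nat.le_of_dvd hD0 h
    omega
  have hpd : ¬ ((p : ℤ) ∣ d) := by
    intro h
    have h2 : p ∣ d.natAbs := Int.natCast_dvd_natCast.mp (by
      simpa using Int.dvd_natAbs.mpr h)
    have h3 : 0 < d.natAbs := Int.natAbs_pos.mpr hd0
    have := Nat.le_of_dvd h3 h2
    omega
  -- the quotient
  set I : Ideal R := Ideal.span {(p : R)} with hI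
  set ρ : R →+* R ⧸ I := Ideal.Quotient.mk I with hρ
  -- key separation
  have key : ∀ z : R, (∃ m n : ℤ, (z : k) = (m : k) + (n : k) * ω) →
      ρ ⟨y, hy⟩ ≠ ρ z := by
    rintro z ⟨m, n, hz⟩ h
    rw [hρ, Ideal.Quotient.eq, hI, Ideal.mem_span_singleton] at h
    obtain ⟨r, hr⟩ := h
    have hrk : y - (z : k) = (p : k) * (r : k) := by
      have := congrArg (Subtype.val) hr
      push_cast at this
      convert this using 2
    -- apply φ
    have hφr : 1 = (p : ℚ) * φ (r : k) := by
      have h1 : φ (y - (z : k)) = 1 := by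
        rw [map_sub, hφy, hz]
        have e1 : ((m : k) : k) = (m : ℚ) • (1 : k) := by
          rw [Rat.smul_def]; push_cast; ring
        have e2 : (n : k) * ω = (n : ℚ) • ω := by
          rw [Rat.smul_def]; push_cast; ring
        rw [map_add, e1, e2, map_smul, map_smul, hφ1, hφω]
        simp
      rw [hrk] at h1
      have e3 : (p : k) * (r : k) = (p : ℚ) • (r : k) := by
        rw [Rat.smul_def]; push_cast; ring
      rw [e3, map_smul] at h1
      rw [← h1]
      simp [Rat.smul_def]
    obtain ⟨nn, hnn⟩ := hdR (r : k) r.2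
    obtain ⟨zz, hzz⟩ := hD _ hnn
    have hφd : φ ((d : k) ^ nn * (r : k)) = (d : ℚ) ^ nn * φ (r : k) := by
      have e4 : (d : k) ^ nn * (r : k) = ((d : ℚ) ^ nn) • (r : k) := by
        rw [Rat.smul_def]; push_cast; ring
      rw [e4, map_smul, smul_eq_mul]
    rw [hφd] at hzz
    -- derive p ∣ D * d ^ nn
    have hmain : ((D : ℤ) * (d : ℤ) ^ nn : ℚ) = ((p : ℤ) * zz : ℚ) := by
      push_cast
      calc (D : ℚ) * (d : ℚ) ^ nn = (D : ℚ) * (d : ℚ) ^ nn * 1 := by ring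
        _ = (D : ℚ) * (d : ℚ) ^ nn * ((p : ℚ) * φ (r : k)) := by rw [← hφr]
        _ = (p : ℚ) * ((D : ℚ) * ((d : ℚ) ^ nn * φ (r : k))) := by ring
        _ = (p : ℚ) * zz := by rw [hzz]
    have hmain2 : (D : ℤ) * (d : ℤ) ^ nn = (p : ℤ) * zz := by
      exact_mod_cast hmain
    have hpdvd : (p : ℤ) ∣ (D : ℤ) * (d : ℤ) ^ nn := ⟨zz, hmain2⟩
    have hprime : Prime (p : ℤ) := Nat.prime_iff_prime_int.mp hp
    rcases hprime.dvd_mul.mp hpdvd with h | h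
    · exact hpD (Int.natCast_dvd_natCast.mp h)
    · exact hpd (hprime.dvd_of_dvd_pow h)
  -- p = 0 in the quotient
  have hp0 : ((p : ℕ) : R ⧸ I) = 0 := by
    rw [show ((p : ℕ) : R ⧸ I) = ρ ((p : ℕ) : R) by rw [hρ]; simp]
    rw [hρ, Ideal.Quotient.eq_zero_iff_mem, hI]
    exact Ideal.subset_span rfl
  -- Finite quotient
  have hfinS : Finite (↥R ⧸ I) := by
    -- `R` is a finitely generated ring
    have hsR : ∀ x ∈ s, x ∈ R := fun x hx => hs ▸ Subring.subset_closure hx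
    let t : Finset ↥R := s.attach.map ⟨fun x => (⟨x.1, hsR x.1 x.2⟩ : ↥R), by
      rintro ⟨a, ha⟩ ⟨b, hb⟩ hab
      simpa [Subtype.ext_iff] using congrArg Subtype.val hab⟩
    have htop : Subring.closure (t : Set ↥R) = ⊤ := by
      rw [Subring.eq_top_iff']
      intro x
      have hx : (x : k) ∈ Subring.map R.subtype (Subring.closure (t : Set ↥R)) := by
        have hle : Subring.closure (s : Set k)
            ≤ Subring.map R.subtype (Subring.closure (t : Set ↥R)) := by
          apply Subring.closure_le.mpr
          intro w hw
          refine ⟨⟨w, hsR w hw⟩, Subring.subset_closure ?_, rfl⟩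
          exact Finset.mem_coe.mpr (Finset.mem_map.mpr ⟨⟨w, hw⟩, Finset.mem_attach _ _, rfl⟩)
        exact hle (by rw [hs]; exact x.2)
      obtain ⟨x', hx', hval⟩ := hx
      rwa [show x' = x from Subtype.ext hval] at hx'
    haveI hFT : Algebra.FiniteType ℤ ↥R := ⟨⟨t, by
      rw [Algebra.adjoin_int, htop]
      ext w
      simp [mem_subalgebraOfSubring]⟩⟩
    haveI hFTQ : Algebra.FiniteType ℤ (↥R ⧸ I) :=
      Algebra.FiniteType.of_surjective (Ideal.Quotient.mkₐ ℤ I)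
        (Ideal.Quotient.mkₐ_surjective ℤ I)
    -- Bezout coefficients
    have hcop : IsCoprime (p : ℤ) d := by
      rw [Int.isCoprime_iff_gcd_eq_one]
      have : Nat.Coprime p d.natAbs := (Nat.Prime.coprime_iff_not_dvd hp).mpr (by
        intro hdvd
        exact hpd ((Int.natCast_dvd_natCast.mpr hdvd).trans (Int.natAbs_dvd.mpr dvd_rfl)))
      simpa [Int.gcd] using this
    obtain ⟨u, v, huv⟩ := hcop
    have hvd : ((v : ℤ) : ↥R ⧸ I) * ((d : ℤ) : ↥R ⧸ I) = 1 := by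
      have h1 := congrArg (fun z : ℤ => (z : ↥R ⧸ I)) huv
      push_cast at h1
      rw [hp0] at h1
      rw [← h1]
      ring
    haveI hIntS : Algebra.IsIntegral ℤ (↥R ⧸ I) := by
      constructor
      intro x
      obtain ⟨r, rfl⟩ := Ideal.Quotient.mk_surjective (I := I) x
      obtain ⟨n, hn⟩ := hdR (r : k) r.2
      have hwR : ((d : k) ^ n * (r : k)) ∈ R :=
        mul_mem (pow_mem (intCast_mem R d) n) r.2
      have hw : IsIntegral ℤ (⟨(d : k) ^ n * (r : k), hwR⟩ : ↥R) := by
        exact (isIntegral_algHom_iff (R.subtype.toIntAlgHom)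
          Subtype.val_injective).mp (by simpa using hn)
      have hq : IsIntegral ℤ
          ((Ideal.Quotient.mkₐ ℤ I) (⟨(d : k) ^ n * (r : k), hwR⟩ : ↥R)) :=
        hw.map (Ideal.Quotient.mkₐ ℤ I)
      have heq : Ideal.Quotient.mk I r
          = ((v : ℤ) : ↥R ⧸ I) ^ n
            * Ideal.Quotient.mk I (⟨(d : k) ^ n * (r : k), hwR⟩ : ↥R) := by
        have hw2 : (⟨(d : k) ^ n * (r : k), hwR⟩ : ↥R) = ((d : ℤ) : ↥R) ^ n * r := by
          ext
          push_cast
          ring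
        rw [hw2, map_mul, map_pow, map_intCast]
        rw [← mul_assoc, ← mul_pow, hvd, one_pow, one_mul]
      rw [heq]
      have hvint : IsIntegral ℤ (((v : ℤ) : ↥R ⧸ I)) := by
        simpa using isIntegral_algebraMap (R := ℤ) (A := ↥R ⧸ I) (x := v)
      exact (hvint.pow n).mul (by simpa using hq)
    haveI hMF : Module.Finite ℤ (↥R ⧸ I) := Algebra.IsIntegral.finite
    haveI : Nontrivial (↥R ⧸ I) :=
      ⟨⟨ρ ⟨y, hy⟩, ρ 0, key 0 ⟨0, 0, by push_cast; ring⟩⟩⟩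
    have hchar : ringChar (↥R ⧸ I) = p :=
      ((Nat.Prime.eq_one_or_self_of_dvd hp _ (ringChar.dvd hp0)).resolve_left
        CharP.ringChar_ne_one)
    haveI : CharP (↥R ⧸ I) p := ringChar.of_eq hchar
    letI : Algebra (ZMod p) (↥R ⧸ I) := (ZMod.castHom dvd_rfl (↥R ⧸ I)).toAlgebra
    letI : Module (ZMod p) (↥R ⧸ I) := Algebra.toModule
    haveI : Module.Finite (ZMod p) (↥R ⧸ I) :=
      Module.Finite.of_restrictScalars_finite ℤ (ZMod p) (↥R ⧸ I)
    haveI : NeZero p := ⟨hp.ne_zero⟩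
    exact Module.finite_of_finite (ZMod p)
  haveI : Small.{0} (↥R ⧸ I) := inferInstance
  refine ⟨Shrink.{0} (↥R ⧸ I), inferInstance, Finite.of_equiv _ (equivShrink _), 
    ((Shrink.ringEquiv (↥R ⧸ I)).symm.toRingHom.comp ρ), ?_⟩
  rintro ⟨z, hzmem, hzeq⟩
  apply key z hzmem
  have := congrArg (Shrink.ringEquiv (↥R ⧸ I)) hzeq
  simpa using this.symm
end

section
/- Consider a Euclidean triangle inscribed in a parallelogram: the parallelogram has vertices 0, v, w, v + w in ℂ (with v, w linearly independent over ℝ), divided by the diagonal from v to w into triangles T₁ = {0, v, w} and T₂ = {v, w, v+w}. If the triangle T₁ has an obtuse angle, then the circumscribed circle of T₁ contains the fourth vertex v + w or the corresponding reflected vertex in its interior; in particular, if the circumcircle of the triangle {0, v, w} contains neither v + w nor any lattice point of ℤv + ℤw other than its vertices in its open disc (the Delaunay condition), then the triangle {0, v, w} is acute or right. -/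
open Complex

lemma delaunay_key (a b c z : ℂ) (R : ℝ)
    (ha : ‖a - z‖ = R) (hb : ‖b - z‖ = R)
    (hc : ‖c - z‖ = R) :
    Complex.normSq (b + c - a - z) = R ^ 2 + 2 * ((b - a) * (starRingEnd ℂ) (c - a)).re := by
  have ha2 : Complex.normSq (a - z) = R ^ 2 := by
    rw [← Complex.sq_norm, ha]
  have hb2 : Complex.normSq (b - z) = R ^ 2 := by
    rw [← Complex.sq_norm, hb]
  have hc2 : Complex.normSq (c - z) = R ^ 2 := by
    rw [← Complex.sq_norm, hc]
  simp only [Complex.normSq_apply, Complex.mul_re, Complex.sub_re, Complex.sub_im,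
    Complex.add_re, Complex.add_im, Complex.conj_re, Complex.conj_im, map_sub] at *
  nlinarith [ha2, hb2, hc2]

lemma delaunay_step (v w : ℂ) (z : ℂ) (R : ℝ)
    (a b c : ℂ) (ha : ‖a - z‖ = R) (hb : ‖b - z‖ = R)
    (hc : ‖c - z‖ = R)
    (m n : ℤ) (hp : b + c - a = (m : ℂ) * v + (n : ℂ) * w)
    (hdel : ∀ p : ℂ, (∃ m n : ℤ, p = (m : ℂ) * v + (n : ℂ) * w) →
      ¬ ‖p - z‖ < R) :
    0 ≤ ((b - a) * (starRingEnd ℂ) (c - a)).re := by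
  by_contra h
  push_neg at h
  have hR : 0 ≤ R := ha ▸ norm_nonneg _
  have key := delaunay_key a b c z R ha hb hc
  have hlt : ‖b + c - a - z‖ < R := by
    have h1 : ‖b + c - a - z‖ ^ 2 < R ^ 2 := by
      rw [Complex.sq_norm, key]; linarith
    nlinarith [norm_nonneg (b + c - a - z)]
  exact hdel (b + c - a) ⟨m, n, hp⟩ hlt

/-- Delaunay condition implies non-obtuseness: if the open circumdisc of the
triangle `{0, v, w}` (circumcenter `z`, circumradius `R`) contains no point of
the lattice `ℤv + ℤw`, then all angles of the triangle are at most `π/2`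
(each angle is ≤ π/2 iff the real inner product of the adjacent sides,
`re ((b - a) * conj (c - a))`, is nonnegative). -/
theorem delaunay_triangle_nonobtuse (v w : ℂ) (hind : LinearIndependent ℝ ![v, w])
    (z : ℂ) (R : ℝ)
    (h0 : ‖0 - z‖ = R) (hv : ‖v - z‖ = R)
    (hw : ‖w - z‖ = R)
    (hdel : ∀ p : ℂ, (∃ m n : ℤ, p = (m : ℂ) * v + (n : ℂ) * w) →
      ¬ ‖p - z‖ < R) :
    0 ≤ ((v - 0) * (starRingEnd ℂ) (w - 0)).re ∧
      0 ≤ ((0 - v) * (starRingEnd ℂ) (w - v)).re ∧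
      0 ≤ ((0 - w) * (starRingEnd ℂ) (v - w)).re := by
  refine ⟨?_, ?_, ?_⟩
  · exact delaunay_step v w z R 0 v w h0 hv hw 1 1 (by push_cast; ring) hdel
  · exact delaunay_step v w z R v 0 w hv h0 hw (-1) 1 (by push_cast; ring) hdel
  · exact delaunay_step v w z R w 0 v hw h0 hv 1 (-1) (by push_cast; ring) hdel
end
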